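/- arXiv:math/0410031 — 5 statements merged into one kernel-verified Lean document; each statement's English description precedes it below -/
import Mathlib

section
/- Let H be a real Hilbert space and let H^ℂ denote H × H with the orthogonal complex structure J(x,y) = (-y, x). If L is a Lagrangian subspace of H^ℂ with L ∩ ({0} × H) = {0}, then L is the graph of a densely defined self-adjoint operator A : D ⊆ H → H, i.e., there exists a dense subspace D of H and a self-adjoint operator A with domain D such that L = {(x, A x) : x ∈ D}. -/
open scoped RealInnerProductSpace

/-- The orthogonal complement of a subspace of `H × H` with respect to the product inner
product `⟪(x₁,y₁),(x₂,y₂)⟫ = ⟪x₁,x₂⟫ + ⟪y₁,y₂⟫`. -/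
def prodOrthogonal {H : Type*} [NormedAddCommGroup H] [InnerProductSpace ℝ H]
    (L : Submodule ℝ (H × H)) : Submodule ℝ (H × H) where
  carrier := {v | ∀ u ∈ L, ⟪u.1, v.1⟫ + ⟪u.2, v.2⟫ = (0 : ℝ)}
  add_mem' := fun {a b} ha hb u hu => by
    have h1 := ha u hu
    have h2 := hb u hu
    simp only [Prod.fst_add, Prod.snd_add, inner_add_right]
    linarith
  zero_mem' := fun u hu => by simp
  smul_mem' := fun c a ha u hu => by
    have h1 := ha u hu
    simp only [Prod.smul_fst, Prod.smul_snd, inner_smul_right]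
    rw [← mul_add, h1, mul_zero]
    
/-- The orthogonal complex structure `J(x, y) = (-y, x)` on `H × H`. -/
def Jprod (H : Type*) [NormedAddCommGroup H] [InnerProductSpace ℝ H] :
    (H × H) →ₗ[ℝ] (H × H) :=
  LinearMap.prod (-(LinearMap.snd ℝ H H)) (LinearMap.fst ℝ H H)

/-- A closed subspace `L ⊆ H^ℂ = H × H` is Lagrangian if `J(L) = Lᗮ` (orthogonal
complement with respect to the product inner product). -/
def IsLagrangianProd {H : Type*} [NormedAddCommGroup H] [InnerProductSpace ℝ H]
    (L : Submodule ℝ (H × H)) : Prop :=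
  IsClosed (L : Set (H × H)) ∧ L.map (Jprod H) = prodOrthogonal L

lemma Jprod_apply {H : Type*} [NormedAddCommGroup H] [InnerProductSpace ℝ H] (v : H × H) :
    Jprod H v = (-v.2, v.1) := rfl

/-- a Lagrangian `L ⊆ H^ℂ` with `L ∩ ({0} × H) = {0}` is the graph of a densely
defined self-adjoint operator on `H`. -/
theorem lagrangian_is_graph_of_selfAdjoint
    {H : Type*} [NormedAddCommGroup H] [InnerProductSpace ℝ H] [CompleteSpace H]
    (L : Submodule ℝ (H × H))
    (hL : IsLagrangianProd L)
    (hinter : L ⊓ (Submodule.prod (⊥ : Submodule ℝ H) (⊤ : Submodule ℝ H)) = ⊥) :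
    ∃ A : H →ₗ.[ℝ] H, Dense (A.domain : Set H) ∧ A.adjoint = A ∧ A.graph = L := by
  obtain ⟨-, hmap⟩ := hL
  have hg : ∀ x : H × H, x ∈ L → x.1 = 0 → x.2 = 0 := by
    intro x hx hx1
    have hmem : x ∈ L ⊓ Submodule.prod (⊥ : Submodule ℝ H) (⊤ : Submodule ℝ H) :=
      ⟨hx, Submodule.mem_prod.2 ⟨by simp [hx1], trivial⟩⟩
    rw [hinter] at hmem
    simp only [Submodule.mem_bot] at hmem
    simp [hmem]
  set A := L.toLinearPMap with hA
  have hgraph : A.graph = L := L.toLinearPMap_graph_eq hg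
  -- membership in L gives pairs (v, A v)
  have hmemL : ∀ x : H × H, x ∈ L ↔ ∃ v : A.domain, (v : H) = x.1 ∧ A v = x.2 := by
    intro x; rw [← hgraph, LinearPMap.mem_graph_iff]
  -- key orthogonality reformulation
  have horth : ∀ w : H × H, (∀ u ∈ L, ⟪u.1, w.1⟫ + ⟪u.2, w.2⟫ = (0:ℝ)) → (-w.2, w.1) ∈ L := by
    intro w hw
    have : w ∈ prodOrthogonal L := hw
    rw [← hmap] at this
    obtain ⟨u, hu, hequ⟩ := this
    rw [Jprod_apply] at hequ
    have h1 : -u.2 = w.1 := congrArg Prod.fst hequ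
    have h2 : u.1 = w.2 := congrArg Prod.snd hequ
    have : (-w.2, w.1) = -u := by
      rw [← h1, ← h2]; simp [Prod.ext_iff]
    rw [this]
    exact neg_mem hu
  -- dense domain
  have hdense : Dense (A.domain : Set H) := by
    have : A.domain = L.map (LinearMap.fst ℝ H H) := rfl
    rw [this, Submodule.dense_iff_topologicalClosure_eq_top,
      Submodule.topologicalClosure_eq_top_iff, Submodule.eq_bot_iff]
    intro x hx
    rw [Submodule.mem_orthogonal] at hx
    have hw : (- (0:H), x) ∈ L := by
      refine horth (x, 0) ?_
      intro u hu
      have : u.1 ∈ L.map (LinearMap.fst ℝ H H) := ⟨u, hu, rfl⟩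
      simp [hx u.1 this]
    have := hg _ hw (by simp)
    simpa using this
  -- symmetry: ⟪A x, y⟫ = ⟪x, A y⟫
  have hsym : A.IsFormalAdjoint A := by
    intro x y
    have hyL : ((y : H), A y) ∈ L := (hmemL _).2 ⟨y, rfl, rfl⟩
    have hxL : ((x : H), A x) ∈ L := (hmemL _).2 ⟨x, rfl, rfl⟩
    have : ((-(A y) : H), (y : H)) ∈ L.map (Jprod H) := ⟨((y:H), A y), hyL, rfl⟩
    rw [hmap] at this
    have h0 := this ((x : H), A x) hxL
    simp only [inner_neg_right] at h0
    have : ⟪A x, (y:H)⟫ = ⟪(x:H), A y⟫ := by linarith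
    simpa [real_inner_comm] using this
  have hle : A ≤ A.adjoint := hsym.le_adjoint hdense
  have hformal := LinearPMap.adjoint_isFormalAdjoint hdense
  have hge : A.adjoint ≤ A := by
    apply LinearPMap.le_of_le_graph
    rw [hgraph]
    rintro ⟨y, z⟩ hyz
    rw [LinearPMap.mem_graph_iff] at hyz
    obtain ⟨y', hy1, hy2⟩ := hyz
    have hy1' : (y' : H) = y := hy1
    have hy2' : (A.adjoint y' : H) = z := hy2
    have key : ((- -y : H), z) ∈ L := by
      refine horth (z, -y) ?_
      rintro u hu
      obtain ⟨v, hv1, hv2⟩ := (hmemL u).1 hu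
      have h2 : ⟪z, (v:H)⟫ = ⟪y, A v⟫ := by
        rw [← hy2', ← hy1']; exact hformal y' v
      rw [← hv1, ← hv2]
      simp only [inner_neg_right]
      have h3 : ⟪(v:H), z⟫ = ⟪(A v : H), y⟫ := by
        rw [real_inner_comm, h2, real_inner_comm]
      linarith
    simpa using key
  exact ⟨A, hdense, le_antisymm hge hle, hgraph⟩
end

section
/- Let V be a real Hilbert space equipped with an orthogonal complex structure J, and let L₀ and L₁ be Lagrangian subspaces of V with V = L₀ ⊕ L₁ (i.e., L₀ ∩ L₁ = {0} and L₀ + L₁ = V). Then the map ρ : L₁ → L₀ defined by ρ(y) = P_{L₀}(J y), where P_{L₀} is the orthogonal projection of V onto L₀, is a continuous linear bijection from L₁ onto L₀. -/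
open scoped RealInnerProductSpace

/-- A closed subspace `L` of a real Hilbert space `V` equipped with an orthogonal complex
structure `J` is *Lagrangian* if `J(L) = Lᗮ`. -/
def IsLagrangian {V : Type*} [NormedAddCommGroup V] [InnerProductSpace ℝ V]
    (J : V →L[ℝ] V) (L : Submodule ℝ V) : Prop :=
  IsClosed (L : Set V) ∧ L.map (J : V →ₗ[ℝ] V) = Lᗮ

/-- for complementary Lagrangians `L₀, L₁`, the map
`ρ : L₁ → L₀`, `ρ(y) = P_{L₀}(J y)` (orthogonal projection of `J y` onto `L₀`) is a
continuous linear bijection from `L₁` onto `L₀`. -/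
theorem rho_continuous_linear_bijective
    {V : Type*} [NormedAddCommGroup V] [InnerProductSpace ℝ V] [CompleteSpace V]
    (J : V →L[ℝ] V)
    (hJ2 : ∀ x, J (J x) = -x)
    (hJorth : ∀ x y : V, ⟪J x, J y⟫ = ⟪x, y⟫)
    (L₀ L₁ : Submodule ℝ V)
    (hL₀ : IsLagrangian J L₀) (hL₁ : IsLagrangian J L₁)
    (hinf : L₀ ⊓ L₁ = ⊥) (hsup : L₀ ⊔ L₁ = ⊤) :
    haveI : CompleteSpace L₀ := hL₀.1.completeSpace_coe
    Continuous (fun y : L₁ => L₀.orthogonalProjectionOnto (J (y : V))) ∧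
      (∀ (y y' : L₁) (c : ℝ), L₀.orthogonalProjectionOnto (J ((y + c • y' : L₁) : V)) =
        L₀.orthogonalProjectionOnto (J (y : V)) + c • L₀.orthogonalProjectionOnto (J (y' : V))) ∧
      Function.Bijective (fun y : L₁ => L₀.orthogonalProjectionOnto (J (y : V))) := by
  haveI : CompleteSpace L₀ := hL₀.1.completeSpace_coe
  have hJinj : Function.Injective J := by
    intro a b h
    have := congrArg J h
    rw [hJ2, hJ2] at this
    exact neg_injective this
  refine ⟨?_, ?_, ?_, ?_⟩
  · exact (L₀.orthogonalProjectionOnto).continuous.comp (J.continuous.comp continuous_subtype_val)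
  · intro y y' c
    simp [map_add, map_smul]
  · -- injective
    intro y y' h
    simp only at h
    have hzero : L₀.orthogonalProjectionOnto (J ((y : V) - (y' : V))) = 0 := by
      rw [map_sub, map_sub, h, sub_self]
    have hmem : J ((y : V) - (y' : V)) ∈ L₀ᗮ := by
      rwa [Submodule.orthogonalProjectionOnto_eq_zero_iff] at hzero
    rw [← hL₀.2] at hmem
    obtain ⟨u, hu, huJ⟩ := hmem
    have : u = (y : V) - (y' : V) := hJinj huJ
    have hsub : (y : V) - (y' : V) ∈ L₀ ⊓ L₁ := ⟨this ▸ hu, sub_mem y.2 y'.2⟩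
    rw [hinf, Submodule.mem_bot, sub_eq_zero] at hsub
    exact Subtype.ext hsub
  · -- surjective
    intro x
    have hmem : (-(J (x : V)) : V) ∈ L₀ ⊔ L₁ := by rw [hsup]; trivial
    rw [Submodule.mem_sup] at hmem
    obtain ⟨u, hu, y, hy, huy⟩ := hmem
    refine ⟨⟨y, hy⟩, ?_⟩
    have hyval : y = -(J (x : V)) - u := eq_sub_of_add_eq' huy
    have hJy : J y = (x : V) - J u := by
      rw [hyval, map_sub, map_neg, hJ2, neg_neg]
    have hJu : J u ∈ L₀ᗮ := hL₀.2 ▸ ⟨u, hu, rfl⟩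
    simp only
    rw [hJy, map_sub, Submodule.orthogonalProjectionOnto_mem_subspace_eq_self x,
      Submodule.orthogonalProjectionOnto_apply_of_mem_orthogonal hJu, sub_zero]
end

section
/- Let V be a real Hilbert space equipped with an orthogonal complex structure J, let S be a closed isotropic subspace of V (i.e., J(S) ⊆ Sᗮ), set V₁ = S ⊕ J(S) and V₂ = V₁ᗮ. If L is a Lagrangian subspace of V containing S, then P_{V₁}(L) = S and L = S ⊕ P_{V₂}(L), where P_{V₁} and P_{V₂} are the orthogonal projections onto V₁ and V₂; moreover P_{V₂}(L) = L ∩ V₂ is a Lagrangian subspace of V₂. -/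
open scoped RealInnerProductSpace

/-- A subspace `L` of a closed `J`-invariant subspace `W` is *Lagrangian in `W`* if it is
closed and `J(L)` equals the orthogonal complement of `L` taken inside `W`. -/
def IsLagrangianIn {V : Type*} [NormedAddCommGroup V] [InnerProductSpace ℝ V]
    (J : V →L[ℝ] V) (W L : Submodule ℝ V) : Prop :=
  IsClosed (L : Set V) ∧ L ≤ W ∧ L.map (J : V →ₗ[ℝ] V) = Lᗮ ⊓ W


/-- let `S` be a closed isotropic subspace, `V₁ = S ⊕ J(S)`, `V₂ = V₁ᗮ`.
If `L` is a Lagrangian containing `S`, then `P_{V₁}(L) = S`, `P_{V₂}(L) = L ∩ V₂`, and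
`L = S ⊕ P_{V₂}(L)`; moreover `L ∩ V₂` is Lagrangian in `V₂`.  Here the image of a set under
an orthogonal projection `P_W` is encoded by its defining property:
`P_W(L) = {p ∈ W | ∃ x ∈ L, x - p ∈ Wᗮ}`. -/
theorem lagrangian_containing_isotropic
    {V : Type*} [NormedAddCommGroup V] [InnerProductSpace ℝ V] [CompleteSpace V]
    (J : V →L[ℝ] V)
    (hJ2 : ∀ x, J (J x) = -x)
    (hJorth : ∀ x y : V, ⟪J x, J y⟫ = ⟪x, y⟫)
    (S : Submodule ℝ V) (hSc : IsClosed (S : Set V))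
    (hSiso : S.map (J : V →ₗ[ℝ] V) ≤ Sᗮ)
    (V₁ V₂ : Submodule ℝ V)
    (hV₁ : V₁ = S ⊔ S.map (J : V →ₗ[ℝ] V)) (hV₂ : V₂ = V₁ᗮ)
    (L : Submodule ℝ V) (hL : IsLagrangian J L) (hSL : S ≤ L) :
    {p : V | p ∈ V₁ ∧ ∃ x ∈ L, x - p ∈ V₁ᗮ} = (S : Set V) ∧
    {q : V | q ∈ V₂ ∧ ∃ x ∈ L, x - q ∈ V₂ᗮ} = ((L ⊓ V₂ : Submodule ℝ V) : Set V) ∧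
    S ⊓ (L ⊓ V₂) = ⊥ ∧ L = S ⊔ (L ⊓ V₂) ∧
    IsLagrangianIn J V₂ (L ⊓ V₂) := by
  obtain ⟨hLc, hLlag⟩ := hL
  set T : Submodule ℝ V := S.map (J : V →ₗ[ℝ] V) with hT
  -- T is closed
  have hTset : (T : Set V) = (J : V → V) ⁻¹' (S : Set V) := by
    ext y
    simp only [Submodule.mem_map, Set.mem_preimage, SetLike.mem_coe,
      ContinuousLinearMap.coe_coe]
    constructor
    · rintro ⟨t, ht, rfl⟩
      show J (J t) ∈ S
      rw [hJ2]
      exact S.neg_mem ht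
    · intro hy
      refine ⟨-J y, S.neg_mem hy, ?_⟩
      show J (-J y) = y
      rw [map_neg, hJ2, neg_neg]
  have hTc : IsClosed (T : Set V) := hTset ▸ hSc.preimage J.continuous
  haveI : CompleteSpace S := hSc.completeSpace_coe
  haveI : CompleteSpace T := hTc.completeSpace_coe
  haveI : CompleteSpace L := hLc.completeSpace_coe
  have hST : S ≤ Tᗮ := by
    intro s hs
    rw [Submodule.mem_orthogonal]
    intro u hu
    rw [real_inner_comm]
    exact hSiso hu s hs
  -- V₁ is closed
  have hSV₁ : S ≤ V₁ := hV₁ ▸ le_sup_left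
  have hTV₁ : T ≤ V₁ := hV₁ ▸ le_sup_right
  have hV₁eq : V₁ᗮᗮ = V₁ := by
    refine le_antisymm ?_ (Submodule.le_orthogonal_orthogonal V₁)
    intro x hx
    set a : V := (S.orthogonalProjectionOnto x : V) with ha
    set b : V := (T.orthogonalProjectionOnto x : V) with hb
    have haS : a ∈ S := SetLike.coe_mem _
    have hbT : b ∈ T := SetLike.coe_mem _
    have h1 : x - a ∈ Sᗮ := Submodule.sub_starProjection_mem_orthogonal x
    have h2 : x - b ∈ Tᗮ := Submodule.sub_starProjection_mem_orthogonal x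
    have hr : x - a - b ∈ V₁ᗮ := by
      rw [hV₁, ← Submodule.inf_orthogonal]
      constructor
      · have he : x - a - b = (x - a) - b := by abel
        rw [he]
        exact Sᗮ.sub_mem h1 (hSiso hbT)
      · have he : x - a - b = (x - b) - a := by abel
        rw [he]
        exact Tᗮ.sub_mem h2 (hST haS)
    have hr2 : x - a - b ∈ V₁ᗮᗮ := by
      refine Submodule.sub_mem _ (Submodule.sub_mem _ hx ?_) ?_
      · exact Submodule.le_orthogonal_orthogonal V₁ (hSV₁ haS)
      · exact Submodule.le_orthogonal_orthogonal V₁ (hTV₁ hbT)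
    have hz : x - a - b = 0 :=
      (Submodule.disjoint_def.mp (Submodule.orthogonal_disjoint V₁ᗮ).symm) _ hr2 hr
    rw [sub_sub, sub_eq_zero] at hz
    rw [hz]
    exact V₁.add_mem (hSV₁ haS) (hTV₁ hbT)
  have hV₁c : IsClosed (V₁ : Set V) := hV₁eq ▸ Submodule.isClosed_orthogonal _
  haveI : CompleteSpace V₁ := hV₁c.completeSpace_coe
  -- Part 1 : P_{V₁}(L) = S
  have part1 : {p : V | p ∈ V₁ ∧ ∃ x ∈ L, x - p ∈ V₁ᗮ} = (S : Set V) := by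
    ext p
    simp only [Set.mem_setOf_eq, SetLike.mem_coe]
    constructor
    · rintro ⟨hpV₁, x, hxL, hr⟩
      rw [hV₁, Submodule.mem_sup] at hpV₁
      obtain ⟨s, hs, b, hbT, rfl⟩ := hpV₁
      obtain ⟨t, htS, rfl⟩ := hbT
      -- show J t = 0
      have h1 : ⟪x, J t⟫ = 0 := by
        have hJtL : J t ∈ Lᗮ := hLlag ▸ ⟨t, hSL htS, rfl⟩
        exact Submodule.inner_right_of_mem_orthogonal hxL hJtL
      have h2 : ⟪s, J t⟫ = 0 :=
        Submodule.inner_right_of_mem_orthogonal hs (hSiso ⟨t, htS, rfl⟩)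
      have h3 : ⟪x - (s + J t), J t⟫ = 0 := by
        rw [real_inner_comm]
        exact Submodule.inner_right_of_mem_orthogonal (hTV₁ ⟨t, htS, rfl⟩) hr
      have h4 : ⟪J t, J t⟫ = 0 := by
        have hexp : ⟪x, J t⟫ = ⟪x - (s + J t), J t⟫ + ⟪s, J t⟫ + ⟪J t, J t⟫ := by
          rw [← inner_add_left, ← inner_add_left]
          congr 1
          abel
        rw [h1, h2, h3] at hexp
        linarith
      have hJt0 : (J t : V) = 0 := by
        simpa using inner_self_eq_zero.mp h4
      show s + J t ∈ S
      rw [hJt0, add_zero]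
      exact hs
    · intro hp
      exact ⟨hSV₁ hp, p, hSL hp, by simp⟩
  -- V₂ᗮ = V₁
  have hV₂o : V₂ᗮ = V₁ := by rw [hV₂, hV₁eq]
  have hV₂c : IsClosed (V₂ : Set V) := hV₂ ▸ Submodule.isClosed_orthogonal _
  -- Part 4 key decomposition
  have hdec : ∀ x ∈ L, x ∈ S ⊔ (L ⊓ V₂) := by
    intro x hx
    set a : V := (V₁.orthogonalProjectionOnto x : V) with ha
    have haV₁ : a ∈ V₁ := SetLike.coe_mem _
    have hra : x - a ∈ V₁ᗮ := Submodule.sub_starProjection_mem_orthogonal x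
    have haS : a ∈ S := by
      have hm : a ∈ {p : V | p ∈ V₁ ∧ ∃ x ∈ L, x - p ∈ V₁ᗮ} := ⟨haV₁, x, hx, hra⟩
      rw [part1] at hm
      exact hm
    refine Submodule.mem_sup.mpr ⟨a, haS, x - a, ⟨L.sub_mem hx (hSL haS), hV₂ ▸ hra⟩, by abel⟩
  -- Part 2 : P_{V₂}(L) = L ⊓ V₂
  have part2 : {q : V | q ∈ V₂ ∧ ∃ x ∈ L, x - q ∈ V₂ᗮ} = ((L ⊓ V₂ : Submodule ℝ V) : Set V) := by
    ext q
    simp only [Set.mem_setOf_eq, SetLike.mem_coe, Submodule.mem_inf]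
    constructor
    · rintro ⟨hq, x, hxL, hr⟩
      rw [hV₂o] at hr
      have hxqS : x - q ∈ S := by
        have hmem : x - q ∈ {p : V | p ∈ V₁ ∧ ∃ x ∈ L, x - p ∈ V₁ᗮ} := by
          refine ⟨hr, x, hxL, ?_⟩
          have he : x - (x - q) = q := by abel
          rw [he, ← hV₂]
          exact hq
        rw [part1] at hmem
        exact hmem
      have hqL : q ∈ L := by simpa using L.sub_mem hxL (hSL hxqS)
      exact ⟨hqL, hq⟩
    · rintro ⟨hqL, hqV₂⟩
      exact ⟨hqV₂, q, hqL, by simp⟩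
  -- Part 3 : S ⊓ (L ⊓ V₂) = ⊥
  have part3 : S ⊓ (L ⊓ V₂) = ⊥ := by
    rw [eq_bot_iff]
    intro x hx
    have hx1 : x ∈ V₁ := hSV₁ hx.1
    have hx2 : x ∈ V₁ᗮ := hV₂ ▸ hx.2.2
    exact (Submodule.disjoint_def.mp (Submodule.orthogonal_disjoint V₁)) x hx1 hx2
  -- Part 4 : L = S ⊔ (L ⊓ V₂)
  have part4 : L = S ⊔ (L ⊓ V₂) := by
    refine le_antisymm hdec (sup_le hSL inf_le_left)
  -- J-invariance of V₂
  have hJV₂ : ∀ y ∈ V₂, J y ∈ V₂ := by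
    intro y hy
    rw [hV₂] at hy ⊢
    rw [Submodule.mem_orthogonal]
    intro u hu
    rw [hV₁, Submodule.mem_sup] at hu
    obtain ⟨s, hs, b, hbT, rfl⟩ := hu
    obtain ⟨t, htS, rfl⟩ := hbT
    have hJsV₁ : (J s : V) ∈ V₁ := hTV₁ ⟨s, hs, rfl⟩
    have h0 : ⟪(J s : V), y⟫ = 0 := Submodule.inner_right_of_mem_orthogonal hJsV₁ hy
    have h1 : ⟪s, J y⟫ = 0 := by
      have he : ⟪s, J y⟫ = -⟪J s, y⟫ := by
        rw [← hJorth s (J y), hJ2, inner_neg_right]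
      rw [he, h0, neg_zero]
    have h2 : ⟪(J t : V), J y⟫ = 0 := by
      rw [hJorth]
      exact Submodule.inner_right_of_mem_orthogonal (hSV₁ htS) hy
    show ⟪s + J t, J y⟫ = 0
    rw [inner_add_left, h1, h2, add_zero]
  -- key: J y ∈ L ↔ y ∈ Lᗮ (as membership condition)
  have hkey : ∀ y : V, (∀ x ∈ L, ⟪x, y⟫ = 0) → J y ∈ L := by
    intro y hy
    have hLoo : Lᗮᗮ = L := Submodule.orthogonal_orthogonal L
    rw [← hLoo, Submodule.mem_orthogonal]
    intro u hu
    rw [← hLlag] at hu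
    obtain ⟨x, hxL, rfl⟩ := hu
    show ⟪J x, J y⟫ = 0
    rw [hJorth]
    exact hy x hxL
  -- Part 5 : L ⊓ V₂ is Lagrangian in V₂
  have part5 : IsLagrangianIn J V₂ (L ⊓ V₂) := by
    refine ⟨?_, inf_le_right, ?_⟩
    · rw [Submodule.coe_inf]
      exact hLc.inter hV₂c
    · apply le_antisymm
      · rintro _ ⟨x, ⟨hxL, hxV₂⟩, rfl⟩
        refine ⟨?_, hJV₂ x hxV₂⟩
        refine (Submodule.mem_orthogonal _ _).2 ?_
        intro u hu
        have hJxLo : J x ∈ Lᗮ := hLlag ▸ ⟨x, hxL, rfl⟩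
        exact Submodule.inner_right_of_mem_orthogonal hu.1 hJxLo
      · rintro y ⟨hyo, hyV₂⟩
        refine ⟨-J y, ⟨?_, ?_⟩, show J (-J y) = y by rw [map_neg, hJ2, neg_neg]⟩
        · have : J (-y) ∈ L := by
            apply hkey
            intro x hxL
            obtain ⟨s, hs, q, hq, rfl⟩ := Submodule.mem_sup.mp (hdec x hxL)
            have h1 : ⟪s, -y⟫ = 0 := by
              rw [inner_neg_right]
              have : ⟪s, y⟫ = 0 :=
                Submodule.inner_right_of_mem_orthogonal (hSV₁ hs) (hV₂ ▸ hyV₂)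
              rw [this, neg_zero]
            have h2 : ⟪q, -y⟫ = 0 := by
              rw [inner_neg_right]
              have : ⟪q, y⟫ = 0 := Submodule.inner_right_of_mem_orthogonal hq hyo
              rw [this, neg_zero]
            rw [inner_add_left, h1, h2, add_zero]
          rwa [map_neg] at this
        · exact Submodule.neg_mem _ (hJV₂ y hyV₂)
  exact ⟨part1, part2, part3, part4, part5⟩
end

section
/- Let V be a real Hilbert space equipped with an orthogonal complex structure J, and let L₁ be a Lagrangian subspace of V. Then the set of Lagrangian subspaces of V complementary to L₁ is open in the operator-norm topology on orthogonal projections: if L is a Lagrangian complementary to L₁, then there exists ε > 0 such that every Lagrangian L' with ‖P_{L'} - P_L‖ < ε is also complementary to L₁. -/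
open scoped RealInnerProductSpace

/-- The orthogonal projection onto a closed subspace `L` of a real Hilbert space, as a
continuous linear operator `V →L[ℝ] V`. -/
noncomputable def orthProjCLM {V : Type*} [NormedAddCommGroup V] [InnerProductSpace ℝ V]
    [CompleteSpace V] (L : Submodule ℝ V) (h : IsClosed (L : Set V)) : V →L[ℝ] V :=
  haveI : CompleteSpace L := h.completeSpace_coe
  L.subtypeL.comp (L.orthogonalProjectionOnto)

section Aux

variable {V : Type*} [NormedAddCommGroup V] [InnerProductSpace ℝ V] [CompleteSpace V]

lemma orthProjCLM_mem (L : Submodule ℝ V) (h : IsClosed (L : Set V)) (x : V) :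
    orthProjCLM L h x ∈ L := by
  haveI : CompleteSpace L := h.completeSpace_coe
  exact (L.orthogonalProjectionOnto x).2

lemma orthProjCLM_apply_self (L : Submodule ℝ V) (h : IsClosed (L : Set V)) {x : V}
    (hx : x ∈ L) : orthProjCLM L h x = x := by
  haveI : CompleteSpace L := h.completeSpace_coe
  have := Submodule.orthogonalProjectionOnto_mem_subspace_eq_self (⟨x, hx⟩ : L)
  simpa [orthProjCLM, Subtype.ext_iff] using congrArg (Subtype.val) this

lemma orthProjCLM_adjoint (L : Submodule ℝ V) (h : IsClosed (L : Set V)) :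
    ContinuousLinearMap.adjoint (orthProjCLM L h) = orthProjCLM L h := by
  haveI : CompleteSpace L := h.completeSpace_coe
  exact (isSelfAdjoint_starProjection L).adjoint_eq

end Aux

/-- the set of Lagrangians complementary to a fixed Lagrangian `L₁` is open in
the operator-norm topology on orthogonal projections: if `L` is complementary to `L₁`, there
is `ε > 0` such that every Lagrangian `L'` with `‖P_{L'} - P_L‖ < ε` is complementary to
`L₁`. -/
theorem open_complementary_lagrangians
    {V : Type*} [NormedAddCommGroup V] [InnerProductSpace ℝ V] [CompleteSpace V]
    (J : V →L[ℝ] V)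
    (hJ2 : ∀ x, J (J x) = -x)
    (hJorth : ∀ x y : V, ⟪J x, J y⟫ = ⟪x, y⟫)
    (L₁ L : Submodule ℝ V)
    (hL₁ : IsLagrangian J L₁) (hL : IsLagrangian J L)
    (hinf : L₁ ⊓ L = ⊥) (hsup : L₁ ⊔ L = ⊤) :
    ∃ ε : ℝ, 0 < ε ∧
      ∀ (L' : Submodule ℝ V) (hL' : IsLagrangian J L'),
        ‖orthProjCLM L' hL'.1 - orthProjCLM L hL.1‖ < ε →
          L₁ ⊓ L' = ⊥ ∧ L₁ ⊔ L' = ⊤ := by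
  rcases subsingleton_or_nontrivial V with hV | hV
  · refine ⟨1, one_pos, fun L' hL' _ => ⟨?_, ?_⟩⟩
    · ext x; simp [Subsingleton.elim x (0 : V)]
    · ext x; simp [Subsingleton.elim x (0 : V)]
  have hcompl : IsCompl L₁ L := ⟨disjoint_iff.2 hinf, codisjoint_iff.2 hsup⟩
  set P₁ : V →L[ℝ] V := orthProjCLM L₁ hL₁.1 with hP₁def
  set P : V →L[ℝ] V := orthProjCLM L hL.1 with hPdef
  set E : V →L[ℝ] V :=
    L₁.subtypeL.comp (L₁.linearProjOfClosedCompl L hcompl hL₁.1 hL.1) with hEdef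
  set Es : V →L[ℝ] V := ContinuousLinearMap.adjoint E with hEsdef
  -- pointwise facts about E
  have hE_mem : ∀ x, E x ∈ L₁ := fun x =>
    (L₁.linearProjOfClosedCompl L hcompl hL₁.1 hL.1 x).2
  have hE_left : ∀ x ∈ L₁, E x = x := fun x hx => by
    have : E x = ((Submodule.projectionOnto L₁ L hcompl) x : V) := by
      simp [hEdef]
      rfl
    rw [this]
    have := Submodule.projectionOnto_apply_left hcompl ⟨x, hx⟩
    exact congrArg Subtype.val this
  have hE_right : ∀ x ∈ L, E x = 0 := fun x hx => by
    have : E x = ((Submodule.projectionOnto L₁ L hcompl) x : V) := by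
      simp [hEdef]
      rfl
    rw [this, Submodule.projectionOnto_apply_of_mem_right hcompl hx]
    rfl
  have hE_ker : ∀ x, x - E x ∈ L := fun x => by
    have hx : x ∈ L₁ ⊔ L := by rw [hsup]; trivial
    obtain ⟨a, ha, b, hb, rfl⟩ := Submodule.mem_sup.1 hx
    have : E (a + b) = a := by rw [map_add, hE_left a ha, hE_right b hb, add_zero]
    rw [this]
    simpa using hb
  -- operator identities
  have h1 : P₁ * E = E := by
    ext x
    exact orthProjCLM_apply_self L₁ hL₁.1 (hE_mem x)
  have h2 : E * P₁ = P₁ := by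
    ext x
    exact hE_left _ (orthProjCLM_mem L₁ hL₁.1 x)
  have h3 : E * P = 0 := by
    ext x
    exact hE_right _ (orthProjCLM_mem L hL.1 x)
  have h4 : P * E = P - 1 + E := by
    ext x
    have h := orthProjCLM_apply_self L hL.1 (hE_ker x)
    rw [map_sub] at h
    have : P (E x) = P x - (x - E x) := by rw [← h]; abel
    simp only [ContinuousLinearMap.mul_apply, ContinuousLinearMap.add_apply,
      ContinuousLinearMap.sub_apply, ContinuousLinearMap.one_apply, this]
    abel
  have hP₁a : ContinuousLinearMap.adjoint P₁ = P₁ := orthProjCLM_adjoint L₁ hL₁.1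
  have hPa : ContinuousLinearMap.adjoint P = P := orthProjCLM_adjoint L hL.1
  have hstarE : star E = Es := ContinuousLinearMap.star_eq_adjoint E
  have hstarP₁ : star P₁ = P₁ := by rw [ContinuousLinearMap.star_eq_adjoint, hP₁a]
  have hstarP : star P = P := by rw [ContinuousLinearMap.star_eq_adjoint, hPa]
  have h5 : P₁ * Es = P₁ := by
    have := congrArg star h2
    rwa [star_mul, hstarE, hstarP₁] at this
  have h6 : P * Es = 0 := by
    have := congrArg star h3
    rwa [star_mul, hstarE, hstarP, star_zero] at this
  have h7 : Es * P₁ = Es := by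
    have := congrArg star h1
    rwa [star_mul, hstarE, hstarP₁] at this
  have h8 : Es * P = P - 1 + Es := by
    have := congrArg star h4
    rwa [star_mul, hstarE, hstarP, star_add, star_sub, star_one, hstarP] at this
  set D : V →L[ℝ] V := P₁ - P with hDdef
  set F : V →L[ℝ] V := E + Es - 1 with hFdef
  have hDF : D * F = 1 := by
    rw [hDdef, hFdef]
    rw [sub_mul, mul_sub, mul_sub, mul_add, mul_add, mul_one, mul_one,
      h1, h4, h5, h6]
    abel
  have hFD : F * D = 1 := by
    rw [hDdef, hFdef]
    rw [mul_sub, sub_mul, sub_mul, add_mul, add_mul, one_mul, one_mul,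
      h2, h3, h7, h8]
    abel
  set u : (V →L[ℝ] V)ˣ := ⟨D, F, hDF, hFD⟩ with hudef
  have hFne : F ≠ 0 := by
    intro h0
    obtain ⟨x, hx⟩ := exists_ne (0 : V)
    have : (1 : V →L[ℝ] V) x = (0 : V →L[ℝ] V) x := by rw [← hFD, h0, zero_mul]
    exact hx (by simpa using this)
  refine ⟨‖F‖⁻¹, inv_pos.2 (norm_pos_iff.2 hFne), fun L' hL' hnorm => ?_⟩
  set P' : V →L[ℝ] V := orthProjCLM L' hL'.1 with hP'def
  have hnear : ‖(P₁ - P') - (u : V →L[ℝ] V)‖ < ‖((u⁻¹ : (V →L[ℝ] V)ˣ) : V →L[ℝ] V)‖⁻¹ := by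
    have h1' : ((u⁻¹ : (V →L[ℝ] V)ˣ) : V →L[ℝ] V) = F := rfl
    have h2' : (u : V →L[ℝ] V) = P₁ - P := rfl
    rw [h1', h2']
    have : P₁ - P' - (P₁ - P) = P - P' := by abel
    rw [this, norm_sub_rev]
    exact hnorm
  set u' : (V →L[ℝ] V)ˣ := Units.ofNearby u (P₁ - P') hnear with hu'def
  have hu'val : (u' : V →L[ℝ] V) = P₁ - P' := rfl
  constructor
  · rw [eq_bot_iff]
    intro x hx
    obtain ⟨hx1, hx2⟩ := Submodule.mem_inf.1 hx
    have hDx : (u' : V →L[ℝ] V) x = 0 := by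
      rw [hu'val, ContinuousLinearMap.sub_apply, orthProjCLM_apply_self L₁ hL₁.1 hx1,
        orthProjCLM_apply_self L' hL'.1 hx2, sub_self]
    have h0 : ((u'⁻¹ : (V →L[ℝ] V)ˣ) * (u' : V →L[ℝ] V) : V →L[ℝ] V) x = x := by
      rw [u'.inv_mul]; rfl
    rw [ContinuousLinearMap.mul_apply, hDx, map_zero] at h0
    simpa [← h0] using Submodule.zero_mem ⊥
  · rw [eq_top_iff]
    rintro v -
    set x : V := ((u'⁻¹ : (V →L[ℝ] V)ˣ) : V →L[ℝ] V) v with hxdef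
    have h0 : ((u' : V →L[ℝ] V) * ((u'⁻¹ : (V →L[ℝ] V)ˣ) : V →L[ℝ] V)) v = v := by
      rw [u'.mul_inv]; rfl
    have hv : v = P₁ x - P' x := by
      rw [ContinuousLinearMap.mul_apply] at h0
      rw [← h0, hu'val, ContinuousLinearMap.sub_apply]
    rw [hv]
    exact sub_mem (Submodule.mem_sup_left (orthProjCLM_mem L₁ hL₁.1 x))
      (Submodule.mem_sup_right (orthProjCLM_mem L' hL'.1 x))
end

section
/- Let V be a real Hilbert space equipped with an orthogonal complex structure J. Then V possesses at least one Lagrangian subspace, i.e., there exists a closed subspace L ⊆ V with J(L) = Lᗮ. -/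
open scoped RealInnerProductSpace

section Aux

variable {V : Type*} [NormedAddCommGroup V] [InnerProductSpace ℝ V]

/-- Isotropy: the symplectic form vanishes on `L`. -/
def Isotropic (J : V →L[ℝ] V) (L : Submodule ℝ V) : Prop :=
  ∀ x ∈ L, ∀ y ∈ L, ⟪x, J y⟫ = 0

lemma isotropic_closure {J : V →L[ℝ] V} {L : Submodule ℝ V} (h : Isotropic J L) :
    Isotropic J L.topologicalClosure := by
  have step1 : ∀ x ∈ L, ∀ y ∈ L.topologicalClosure, ⟪x, J y⟫ = 0 := by
    intro x hx y hy
    have hcont : Continuous fun y : V => ⟪x, J y⟫ :=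
      (continuous_const.inner (J.continuous))
    have : y ∈ closure (L : Set V) := hy
    have hmem : y ∈ {y : V | ⟪x, J y⟫ = 0} := by
      refine closure_minimal ?_ (isClosed_eq hcont continuous_const) this
      intro z hz; exact h x hx z hz
    exact hmem
  intro x hx y hy
  have hcont : Continuous fun x : V => ⟪x, J y⟫ :=
    (continuous_id.inner continuous_const)
  have : x ∈ closure (L : Set V) := hx
  have hmem : x ∈ {x : V | ⟪x, J y⟫ = 0} := by
    refine closure_minimal ?_ (isClosed_eq hcont continuous_const) this
    intro z hz; exact step1 z hz y hy
  exact hmem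

end Aux

/-- every real Hilbert space with an orthogonal complex structure has a
Lagrangian subspace. -/
theorem exists_lagrangian {V : Type*} [NormedAddCommGroup V] [InnerProductSpace ℝ V]
    [CompleteSpace V] (J : V →L[ℝ] V)
    (hJ2 : ∀ x, J (J x) = -x)
    (hJorth : ∀ x y : V, ⟪J x, J y⟫ = ⟪x, y⟫) :
    ∃ L : Submodule ℝ V, IsLagrangian J L := by
  classical
  -- basic facts about J
  have hskew : ∀ x y : V, ⟪x, J y⟫ = -⟪J x, y⟫ := by
    intro x y
    have := hJorth (J x) y
    rw [hJ2, inner_neg_left] at this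
    linarith
  have hself : ∀ x : V, ⟪x, J x⟫ = 0 := by
    intro x
    have h1 := hskew x x
    have h2 : ⟪J x, x⟫ = ⟪x, J x⟫ := real_inner_comm _ _
    rw [h2] at h1
    linarith
  -- J as a continuous linear equivalence
  let e : V ≃L[ℝ] V :=
    { J with
      invFun := fun x => -J x
      left_inv := fun x => by simp [hJ2 x]
      right_inv := fun x => by
        show J (-J x) = x
        rw [map_neg, hJ2, neg_neg]
      continuous_invFun := J.continuous.neg }
  have he : ∀ x, e x = J x := fun _ => rfl
  -- the set of closed isotropic subspaces
  set S : Set (Submodule ℝ V) :=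
    {L | IsClosed (L : Set V) ∧ Isotropic J L} with hS
  obtain ⟨L, hLS, hmax⟩ : ∃ m, Maximal (· ∈ S) m := by
    apply zorn_le₀
    intro c hcS hc
    rcases c.eq_empty_or_nonempty with rfl | hne
    · exact ⟨⊥, ⟨by simp [isClosed_singleton], fun x hx y hy => by
        simp_all [Submodule.mem_bot]⟩, by simp⟩
    · refine ⟨(sSup c).topologicalClosure, ⟨Submodule.isClosed_topologicalClosure _, ?_⟩,
        fun z hz => le_trans (le_sSup hz) (Submodule.le_topologicalClosure _)⟩
      apply isotropic_closure
      intro x hx y hy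
      rw [Submodule.mem_sSup_of_directed hne hc.directedOn] at hx hy
      obtain ⟨A, hA, hxA⟩ := hx
      obtain ⟨B, hB, hyB⟩ := hy
      rcases hc.total hA hB with hAB | hBA
      · exact (hcS hB).2 x (hAB hxA) y hyB
      · exact (hcS hA).2 x hxA y (hBA hyB)
  obtain ⟨hLclosed, hLiso⟩ := hLS
  -- K = J(L)
  set K : Submodule ℝ V := L.map (J : V →ₗ[ℝ] V) with hK
  have hKset : (K : Set V) = e '' (L : Set V) := by
    ext x; simp [hK, he]
  have hKclosed : IsClosed (K : Set V) := by
    rw [hKset]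
    exact e.toHomeomorph.isClosedMap _ hLclosed
  haveI : CompleteSpace K := hKclosed.completeSpace_coe
  -- K ≤ Lᗮ
  have hKle : K ≤ Lᗮ := by
    rintro _ ⟨y, hy, rfl⟩
    intro x hx
    exact hLiso x hx y hy
  -- Lᗮ ≤ K
  have hle : Lᗮ ≤ K := by
    intro v hv
    by_contra hvK
    set w : V := v - (K.orthogonalProjection v : V) with hw
    have hwK : w ∈ Kᗮ := K.sub_starProjection_mem_orthogonal v
    have hwL : w ∈ Lᗮ := by
      have : ((K.orthogonalProjection v : V)) ∈ Lᗮ :=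
        hKle (K.orthogonalProjection v).2
      exact Submodule.sub_mem _ hv this
    have hwne : w ≠ 0 := by
      intro h0
      apply hvK
      have : v = (K.orthogonalProjection v : V) := by
        have := sub_eq_zero.mp (hw ▸ h0)
        exact this
      rw [this]
      exact (K.orthogonalProjection v).2
    -- key orthogonality relations
    have hxJw : ∀ x ∈ L, ⟪x, J w⟫ = 0 := by
      intro x hx
      rw [hskew]
      have hJxK : J x ∈ K := ⟨x, hx, rfl⟩
      simp [hwK _ hJxK]
    have hwJx : ∀ x ∈ L, ⟪w, J x⟫ = 0 := by
      intro x hx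
      have : J x ∈ K := ⟨x, hx, rfl⟩
      rw [real_inner_comm]
      exact hwK _ this
    -- extend L
    set L' : Submodule ℝ V := (L ⊔ Submodule.span ℝ {w}).topologicalClosure with hL'
    have hL'iso : Isotropic J L' := by
      apply isotropic_closure
      intro a ha b hb
      rw [Submodule.mem_sup] at ha hb
      obtain ⟨x, hx, _, hcx, rfl⟩ := ha
      obtain ⟨y, hy, _, hcy, rfl⟩ := hb
      rw [Submodule.mem_span_singleton] at hcx hcy
      obtain ⟨a, rfl⟩ := hcx
      obtain ⟨b, rfl⟩ := hcy
      simp only [map_add, map_smul, inner_add_left, inner_add_right,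
        real_inner_smul_left, real_inner_smul_right,
        hLiso x hx y hy, hxJw x hx, hwJx y hy, hself w]
      ring
    have hLL' : L ≤ L' :=
      le_trans le_sup_left (Submodule.le_topologicalClosure _)
    have hL'S : L' ∈ S := ⟨Submodule.isClosed_topologicalClosure _, hL'iso⟩
    have : L' = L := le_antisymm (hmax hL'S hLL') hLL'
    have hwL' : w ∈ L' := by
      apply Submodule.le_topologicalClosure
      exact Submodule.mem_sup_right (Submodule.mem_span_singleton_self w)
    rw [this] at hwL'
    have : ⟪w, w⟫ = 0 := hwL w hwL'
    exact hwne (inner_self_eq_zero.mp this)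
  exact ⟨L, hLclosed, le_antisymm hKle hle⟩
end
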